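/- Let (K, σ) be a 2-algebraically closed σ-field with fixed field F. Then (K, σ) is 3-algebraically closed if and only if K has exactly two σ-conjugacy classes (equivalently, every nonzero element of K is σ-conjugate to 1). Moreover, if (K, σ) is 3-algebraically closed, then (K, σ) is (1+|F|)-algebraically closed; in particular, if in addition F is infinite, then (K, σ) is ℵ_0-algebraically closed. -/

import Mathlib

open Polynomial

variable {K : Type*} [Field K]

/-- `skewN σ i a = σ^{i-1}(a)⋯σ(a)·a`, with `skewN σ 0 a = 1`. -/
def skewN (σ : K →+* K) : ℕ → K → K
  | 0, _ => 1
  | i + 1, a => σ (skewN σ i a) * a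

/-- Right evaluation of a skew polynomial `P = Σ aᵢ Tⁱ` at `a`: `P(a) = Σ aᵢ Nᵢ(a)`. -/
noncomputable def skewEval (σ : K →+* K) (P : Polynomial K) (a : K) : K :=
  ∑ i ∈ P.support, P.coeff i * skewN σ i a

/-- Multiplication in the skew polynomial ring `K[T;σ]` (with `T·a = σ(a)·T`),
using `Polynomial K` as the carrier of coefficient sequences. -/
noncomputable def skewMul (σ : K →+* K) (P Q : Polynomial K) : Polynomial K :=
  ∑ i ∈ P.support, ∑ j ∈ Q.support,
    Polynomial.C (P.coeff i * (⇑σ)^[i] (Q.coeff j)) * Polynomial.X ^ (i + j)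

universe u

/-- `(K, σ)` is `c`-algebraically closed: every skew polynomial of degree `> 1` with nonzero
constant term has at least `c` distinct right roots. -/
def CAlgClosed {K : Type u} [Field K] (σ : K →+* K) (c : Cardinal.{u}) : Prop :=
  ∀ P : Polynomial K, 1 < P.natDegree → P.coeff 0 ≠ 0 →
    c ≤ Cardinal.mk {x : K // skewEval σ P x = 0}

lemma skewEval_zero (σ : K →+* K) (P : Polynomial K) : skewEval σ P 0 = P.coeff 0 := by
  rw [skewEval, Finset.sum_eq_single 0]
  · simp [skewN]
  · rintro (_|i) hi hne
    · exact absurd rfl hne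
    · simp [skewN]
  · intro h
    simp [Polynomial.notMem_support_iff.mp h]

lemma skewEval_quad (σ : K →+* K) (u v b : K) :
    skewEval σ (X ^ 2 + C u * X + C v) b = σ b * b + u * b + v := by
  have hc : ∀ n, (X ^ 2 + C u * X + C v : Polynomial K).coeff n
      = (if n = 2 then 1 else 0) + (if n = 1 then u else 0) + (if n = 0 then v else 0) := by
    intro n
    simp [coeff_add, coeff_X_pow, coeff_C, coeff_C_mul, coeff_X, eq_comm]
  have hsub : (X ^ 2 + C u * X + C v : Polynomial K).support ⊆ Finset.range 3 := by
    intro n hn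
    rw [Finset.mem_range]
    by_contra h
    have hmem := Polynomial.mem_support_iff.mp hn
    rw [hc n] at hmem
    have h2 : n ≠ 2 := by omega
    have h1 : n ≠ 1 := by omega
    have h0 : n ≠ 0 := by omega
    simp [h0, h1, h2] at hmem
  rw [skewEval, Finset.sum_subset hsub (by
    intro i _ hi; simp [Polynomial.notMem_support_iff.mp hi])]
  rw [Finset.sum_range_succ, Finset.sum_range_succ, Finset.sum_range_one]
  have hN2 : skewN σ 2 b = σ b * b := by
    show skewN σ (1+1) b = _
    rw [skewN, skewN, skewN]
    simp
  simp [hc, skewN, hN2]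
  ring

lemma natDegree_quad_gt (u v : K) : 1 < (X ^ 2 + C u * X + C v : Polynomial K).natDegree := by
  have h : (X ^ 2 + C u * X + C v : Polynomial K).coeff 2 = 1 := by
    simp [coeff_add, coeff_X_pow, coeff_C, coeff_C_mul, coeff_X]
  have := Polynomial.le_natDegree_of_ne_zero (n := 2) (p := (X ^ 2 + C u * X + C v : Polynomial K)) (by rw [h]; exact one_ne_zero)
  omega

lemma coeff0_quad (u v : K) : (X ^ 2 + C u * X + C v : Polynomial K).coeff 0 = v := by
  simp [coeff_add, coeff_X_pow, coeff_C, coeff_C_mul, coeff_X]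

lemma iter_add_smul (σ : K →+* K) (e : K) (he : σ e = e) :
    ∀ (i : ℕ) (y z : K), (⇑σ)^[i] (y + e * z) = (⇑σ)^[i] y + e * (⇑σ)^[i] z
  | 0, y, z => rfl
  | i + 1, y, z => by
    rw [Function.iterate_succ_apply, Function.iterate_succ_apply, Function.iterate_succ_apply,
      map_add, map_mul, he]
    exact iter_add_smul σ e he i (σ y) (σ z)

lemma skewN_conj (σ : K →+* K) {x : K} (hx : x ≠ 0) :
    ∀ i, skewN σ i (σ x * x⁻¹) = (⇑σ)^[i] x * x⁻¹
  | 0 => by simp [skewN, hx]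
  | i + 1 => by
    have hσx : σ x ≠ 0 := by simpa using hx
    rw [skewN, skewN_conj σ hx i, map_mul, map_inv₀, Function.iterate_succ_apply']
    field_simp

lemma skewEval_conj (σ : K →+* K) (P : Polynomial K) {x : K} (hx : x ≠ 0) :
    skewEval σ P (σ x * x⁻¹) = (∑ i ∈ P.support, P.coeff i * (⇑σ)^[i] x) * x⁻¹ := by
  rw [skewEval, Finset.sum_mul]
  exact Finset.sum_congr rfl fun i _ => by rw [skewN_conj σ hx i, mul_assoc]

lemma conj_eq {σ : K →+* K} {y y' : K} (hy : y ≠ 0) (hy' : y' ≠ 0)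
    (h : σ y * y⁻¹ = σ y' * y'⁻¹) :
    ∃ d : K, σ d = d ∧ d ≠ 0 ∧ y = d * y' := by
  have hσy' : σ y' ≠ 0 := by simpa using hy'
  refine ⟨y * y'⁻¹, ?_, by simp [hy, hy'], by field_simp⟩
  rw [map_mul, map_inv₀]
  field_simp
  field_simp at h
  linear_combination h

lemma conj_smul {σ : K →+* K} {e x : K} (he : σ e = e) (he0 : e ≠ 0) (hx : x ≠ 0) :
    σ (e * x) * (e * x)⁻¹ = σ x * x⁻¹ := by
  rw [map_mul, he, mul_inv]
  field_simp

lemma core_lemma {K : Type u} [Field K] (σ : K →+* K) (h2 : CAlgClosed σ 2)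
    (H : ∀ a : K, a ≠ 0 → ∃ x : K, x ≠ 0 ∧ a = σ x * x⁻¹) :
    CAlgClosed σ (1 + Cardinal.mk {c : K // σ c = c}) := by
  intro P hdeg h0
  obtain ⟨⟨r₁, hr₁⟩, ⟨r₂, hr₂⟩, hne⟩ := Cardinal.two_le_iff.mp (h2 P hdeg h0)
  have hne' : r₁ ≠ r₂ := fun h => hne (Subtype.ext h)
  have hroot_ne : ∀ r : K, skewEval σ P r = 0 → r ≠ 0 := by
    intro r hr h; rw [h, skewEval_zero] at hr; exact h0 hr
  obtain ⟨x₁, hx₁, he₁⟩ := H r₁ (hroot_ne _ hr₁)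
  obtain ⟨x₂, hx₂, he₂⟩ := H r₂ (hroot_ne _ hr₂)
  set L : K → K := fun x => ∑ i ∈ P.support, P.coeff i * (⇑σ)^[i] x with hL
  have hLroot : ∀ x : K, x ≠ 0 → L x = 0 → skewEval σ P (σ x * x⁻¹) = 0 := by
    intro x hx h
    rw [skewEval_conj σ P hx]
    exact mul_eq_zero_of_left h x⁻¹
  have hLz : ∀ x : K, x ≠ 0 → skewEval σ P (σ x * x⁻¹) = 0 → L x = 0 := by
    intro x hx h
    rw [skewEval_conj σ P hx] at h
    rcases mul_eq_zero.mp h with h' | h'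
    · exact h'
    · exact absurd h' (inv_ne_zero hx)
  have hL₁ : L x₁ = 0 := hLz x₁ hx₁ (by rw [← he₁]; exact hr₁)
  have hL₂ : L x₂ = 0 := hLz x₂ hx₂ (by rw [← he₂]; exact hr₂)
  have hLlin : ∀ (e : K), σ e = e → ∀ y z : K, L (y + e * z) = L y + e * L z := by
    intro e he y z
    simp only [hL]
    rw [Finset.mul_sum, ← Finset.sum_add_distrib]
    refine Finset.sum_congr rfl fun i _ => ?_
    rw [iter_add_smul σ e he]
    ring
  have hx12 : ∀ e : K, σ e = e → x₁ ≠ e * x₂ := by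
    intro e he h
    have he0 : e ≠ 0 := by
      rintro rfl
      rw [zero_mul] at h
      exact hx₁ h
    exact hne' (by rw [he₁, he₂, h, conj_smul he he0 hx₂])
  have key : ∀ c : K, σ c = c → x₁ + c * x₂ ≠ 0 := by
    intro c hc h
    exact hx12 (-c) (by rw [map_neg, hc]) (by linear_combination h)
  have hroot : ∀ c : K, σ c = c → skewEval σ P (σ (x₁ + c * x₂) * (x₁ + c * x₂)⁻¹) = 0 := by
    intro c hc
    exact hLroot _ (key c hc) (by rw [hLlin c hc, hL₁, hL₂]; ring)
  classical
  let f : Option {c : K // σ c = c} → {x : K // skewEval σ P x = 0} :=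
    fun o => match o with
    | none => ⟨r₂, hr₂⟩
    | some c => ⟨σ (x₁ + c.1 * x₂) * (x₁ + c.1 * x₂)⁻¹, hroot c.1 c.2⟩
  have hfinj : Function.Injective f := by
    rintro (_|⟨c,hc⟩) (_|⟨c',hc'⟩) h
    · rfl
    · exfalso
      have h' : σ (x₁ + c' * x₂) * (x₁ + c' * x₂)⁻¹ = σ x₂ * x₂⁻¹ := by
        have := congrArg Subtype.val h
        simp only [f] at this
        rw [← this, ← he₂]
      obtain ⟨d, hd, hd0, hdy⟩ := conj_eq (key c' hc') hx₂ h'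
      exact hx12 (d - c') (by rw [map_sub, hd, hc']) (by linear_combination hdy)
    · exfalso
      have h' : σ (x₁ + c * x₂) * (x₁ + c * x₂)⁻¹ = σ x₂ * x₂⁻¹ := by
        have := congrArg Subtype.val h
        simp only [f] at this
        rw [this, ← he₂]
      obtain ⟨d, hd, hd0, hdy⟩ := conj_eq (key c hc) hx₂ h'
      exact hx12 (d - c) (by rw [map_sub, hd, hc]) (by linear_combination hdy)
    · have h' : σ (x₁ + c * x₂) * (x₁ + c * x₂)⁻¹ = σ (x₁ + c' * x₂) * (x₁ + c' * x₂)⁻¹ := by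
        have := congrArg Subtype.val h
        simpa only [f] using this
      obtain ⟨d, hd, hd0, hdy⟩ := conj_eq (key c hc) (key c' hc') h'
      by_cases hd1 : d = 1
      · subst hd1
        have h2 : (c - c') * x₂ = 0 := by linear_combination hdy
        have hcc : c = c' := sub_eq_zero.mp ((mul_eq_zero.mp h2).resolve_right hx₂)
        subst hcc
        rfl
      · exfalso
        have hd1' : (1:K) - d ≠ 0 := sub_ne_zero.mpr fun h => hd1 h.symm
        have heq : x₁ = ((d * c' - c) * (1 - d)⁻¹) * x₂ := by
          have hstep : x₁ * (1 - d) = (d * c' - c) * x₂ := by linear_combination hdy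
          field_simp
          linear_combination hstep
        exact hx12 _ (by rw [map_mul, map_sub, map_mul, map_inv₀, map_sub, map_one, hd, hc, hc']) heq
  calc 1 + Cardinal.mk {c : K // σ c = c}
      = Cardinal.mk (Option {c : K // σ c = c}) := by rw [Cardinal.mk_option, add_comm]
    _ ≤ _ := Cardinal.mk_le_of_injective hfinj

lemma part1_lemma {K : Type u} [Field K] (σ : K →+* K) (h3 : CAlgClosed σ 3) :
    ∀ a : K, a ≠ 0 → ∃ x : K, x ≠ 0 ∧ a = σ x * x⁻¹ := by
  intro a ha
  by_cases ha1 : a = 1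
  · exact ⟨1, one_ne_zero, by simp [ha1]⟩
  by_cases hσa : σ a = 1
  · exact ⟨a⁻¹, inv_ne_zero ha, by rw [map_inv₀, hσa, inv_one, one_mul, inv_inv]⟩
  have ha1' : a - 1 ≠ 0 := sub_ne_zero.mpr ha1
  set u : K := (1 - σ a * a) / (a - 1) with hu
  set v : K := -1 - u with hv
  have hv0 : v ≠ 0 := by
    have hvv : v * (a - 1) = a * (σ a - 1) := by
      rw [hv, hu]; field_simp; ring
    intro h
    rw [h, zero_mul] at hvv
    rcases mul_eq_zero.mp hvv.symm with h' | h'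
    · exact ha h'
    · exact hσa (by linear_combination h')
  have hE1 : (1:K) + u + v = 0 := by
    rw [hv]; ring
  have hE2 : σ a * a + u * a + v = 0 := by
    rw [hv, hu]; field_simp; ring
  have h3' := h3 (X ^ 2 + C u * X + C v) (natDegree_quad_gt u v)
    (by rw [coeff0_quad]; exact hv0)
  have hex : ∃ c : K, (σ c * c + u * c + v = 0) ∧ c ≠ 1 ∧ c ≠ a := by
    by_contra hcon
    push_neg at hcon
    have hsub : {x : K | skewEval σ (X ^ 2 + C u * X + C v) x = 0} ⊆ {1, a} := by
      intro x hx
      rw [Set.mem_setOf_eq, skewEval_quad] at hx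
      by_contra hmem
      simp only [Set.mem_insert_iff, Set.mem_singleton_iff] at hmem
      push_neg at hmem
      exact hmem.2 (hcon x hx hmem.1)
    have hle : Cardinal.mk {x : K // skewEval σ (X ^ 2 + C u * X + C v) x = 0}
        ≤ Cardinal.mk ({1, a} : Set K) := Cardinal.mk_le_mk_of_subset hsub
    have hle2 : Cardinal.mk ({1, a} : Set K) ≤ 2 := by
      have h1 := Cardinal.mk_insert_le (s := ({a} : Set K)) (a := (1:K))
      rw [Cardinal.mk_singleton] at h1
      exact h1.trans_eq one_add_one_eq_two
    have : (3 : Cardinal) ≤ 2 := h3'.trans (hle.trans hle2)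
    norm_num at this
  obtain ⟨c, hE3, hc1, hca⟩ := hex
  have hca' : c - a ≠ 0 := sub_ne_zero.mpr hca
  have hc1' : c - 1 ≠ 0 := sub_ne_zero.mpr hc1
  have hσca : σ c - σ a ≠ 0 := by
    intro h
    exact hca' (by
      have := σ.injective (a₁ := c) (a₂ := a) (by linear_combination h)
      rw [this, sub_self])
  refine ⟨(c - 1) * (c - a)⁻¹, by
    simp only [mul_ne_zero_iff]
    exact ⟨hc1', inv_ne_zero hca'⟩, ?_⟩
  rw [map_mul, map_inv₀, map_sub, map_sub, map_one, mul_inv, inv_inv]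
  field_simp
  linear_combination (c - a) * hE1 + (1 - c) * hE2 - (1 - a) * hE3

/-- For a 2-algebraically closed σ-field `(K, σ)` with fixed field `F`: it is
3-algebraically closed iff every nonzero element is σ-conjugate to `1` (i.e. `K` has exactly
two σ-conjugacy classes); moreover 3-algebraic closedness implies `(1+|F|)`-algebraic
closedness, and, if `F` is infinite, ℵ₀-algebraic closedness. -/
theorem stmt_17 {K : Type u} [Field K] (σ : K →+* K)
    (h2 : CAlgClosed σ 2) :
    (CAlgClosed σ 3 ↔ ∀ a : K, a ≠ 0 → ∃ x : K, x ≠ 0 ∧ a = σ x * x⁻¹) ∧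
    (CAlgClosed σ 3 → CAlgClosed σ (1 + Cardinal.mk {c : K // σ c = c})) ∧
    (CAlgClosed σ 3 → Infinite {c : K // σ c = c} → CAlgClosed σ Cardinal.aleph0) := by
  have mono : ∀ c c' : Cardinal.{u}, c ≤ c' → CAlgClosed σ c' → CAlgClosed σ c :=
    fun c c' h h' P h1 h2' => h.trans (h' P h1 h2')
  have hF2 : (2 : Cardinal.{u}) ≤ Cardinal.mk {c : K // σ c = c} := by
    rw [Cardinal.two_le_iff]
    exact ⟨⟨0, map_zero σ⟩, ⟨1, map_one σ⟩,
      fun h => zero_ne_one (congrArg Subtype.val h)⟩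
  have h31 : (3 : Cardinal.{u}) ≤ 1 + Cardinal.mk {c : K // σ c = c} := by
    calc (3 : Cardinal.{u}) = 1 + 2 := by norm_num
      _ ≤ _ := add_le_add le_rfl hF2
  refine ⟨⟨fun h3 => part1_lemma σ h3,
      fun H => mono _ _ h31 (core_lemma σ h2 H)⟩,
    fun h3 => core_lemma σ h2 (part1_lemma σ h3),
    fun h3 hinf => mono _ _ ?_ (core_lemma σ h2 (part1_lemma σ h3))⟩
  calc Cardinal.aleph0 ≤ Cardinal.mk {c : K // σ c = c} := Cardinal.infinite_iff.mp hinf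
    _ ≤ 1 + Cardinal.mk {c : K // σ c = c} := le_add_self
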